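/- (Multiplicative Azuma) Let (ℱ_t)_{t=0}^N be a filtration and let X₁, …, X_N be random variables with values in [0,1] such that X_t is ℱ_t-measurable for each t. Then for any δ ∈ (0,1), with probability at least 1 − δ, Σ_{t=1}^N E[X_t | ℱ_{t−1}] ≤ 2 Σ_{t=1}^N X_t + 2 log(1/δ). -/

import Mathlib

open MeasureTheory Finset

lemma mult_azuma_meas {Ω : Type*} {m : MeasurableSpace Ω}
    (μ : Measure Ω)
    (F : ℕ → MeasurableSpace Ω) (hmono : ∀ i j, i ≤ j → F i ≤ F j)
    (X : ℕ → Ω → ℝ) (hadapted : ∀ t, Measurable[F (t+1)] (X (t+1))) (n : ℕ) :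
    Measurable[F n] (fun ω => ∑ t ∈ Finset.range n,
      ((μ[X (t+1) | F t]) ω / 2 - X (t+1) ω)) := by
  apply Finset.measurable_sum
  intro t ht
  have h1 : Measurable[F n] (μ[X (t+1) | F t]) :=
    ((stronglyMeasurable_condExp).measurable).mono (hmono t n (Finset.mem_range.mp ht).le) le_rfl
  have h2 : Measurable[F n] (X (t+1)) :=
    (hadapted t).mono (hmono (t+1) n (Finset.mem_range.mp ht)) le_rfl
  exact (h1.div_const 2).sub h2

lemma mult_azuma_key {Ω : Type*} {m : MeasurableSpace Ω}
    (μ : Measure Ω) [IsProbabilityMeasure μ]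
    (F : ℕ → MeasurableSpace Ω) (hmono : ∀ i j, i ≤ j → F i ≤ F j)
    (hle : ∀ i, F i ≤ m)
    (X : ℕ → Ω → ℝ) (hadapted : ∀ t, Measurable[F (t+1)] (X (t+1)))
    (hbound : ∀ t ω, X t ω ∈ Set.Icc (0:ℝ) 1) (n : ℕ) :
    ∫ ω, Real.exp (∑ t ∈ Finset.range n,
      ((μ[X (t+1) | F t]) ω / 2 - X (t+1) ω)) ∂μ ≤ 1 := by
  -- basic facts
  have hXm : ∀ t, Measurable (X (t+1)) := fun t => (hadapted t).mono (hle (t+1)) le_rfl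
  have hXint : ∀ t, Integrable (X (t+1)) μ := by
    intro t
    refine (integrable_const (1:ℝ)).mono' (hXm t).aestronglyMeasurable ?_
    refine Filter.Eventually.of_forall fun ω => ?_
    rw [Real.norm_eq_abs, abs_of_nonneg (hbound (t+1) ω).1]
    exact (hbound (t+1) ω).2
  set g : ℕ → Ω → ℝ := fun t => μ[X (t+1) | F t] with hg
  have hgae : ∀ᵐ ω ∂μ, ∀ t : ℕ, 0 ≤ g t ω ∧ g t ω ≤ 1 := by
    rw [ae_all_iff]
    intro t
    have h0 : (0:Ω → ℝ) ≤ᵐ[μ] g t :=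
      condExp_nonneg (Filter.Eventually.of_forall fun ω => (hbound (t+1) ω).1)
    have h1 : g t ≤ᵐ[μ] fun _ => (1:ℝ) := by
      have := condExp_mono (m := F t) (hXint t) (integrable_const (1:ℝ))
        (Filter.Eventually.of_forall fun ω => (hbound (t+1) ω).2)
      rwa [condExp_const (hle t) (1:ℝ)] at this
    filter_upwards [h0, h1] with ω h0 h1 using ⟨h0, h1⟩
  induction n with
  | zero => simp
  | succ n ih =>
    set S : Ω → ℝ := fun ω => ∑ t ∈ Finset.range n, (g t ω / 2 - X (t+1) ω) with hS
    have hSmeas : Measurable[F n] S := mult_azuma_meas μ F hmono X hadapted n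
    set f : Ω → ℝ := fun ω => Real.exp (S ω + g n ω / 2) with hf
    set h : Ω → ℝ := fun ω => Real.exp (-(X (n+1) ω)) with hh
    have hgnm : Measurable[F n] (g n) := (stronglyMeasurable_condExp).measurable
    have hfsm : StronglyMeasurable[F n] f :=
      ((hSmeas.add (hgnm.div_const 2)).exp).stronglyMeasurable
    have hfm : Measurable f := ((hSmeas.mono (hle n) le_rfl).add
      ((hgnm.mono (hle n) le_rfl).div_const 2)).exp
    have hhm : Measurable h := (hXm n).neg.exp
    -- a.e. bound on exp terms
    have hSbd : ∀ᵐ ω ∂μ, S ω + g n ω / 2 ≤ (n:ℝ) + 1 := by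
      filter_upwards [hgae] with ω hω
      have h1 : S ω ≤ (n:ℝ) := by
        calc S ω ≤ ∑ t ∈ Finset.range n, (1:ℝ) := by
              apply Finset.sum_le_sum
              intro t _
              have := (hω t).2
              have := (hbound (t+1) ω).1
              linarith
          _ = (n:ℝ) := by simp
      have h2 := (hω n).2
      linarith
    have hfint : Integrable f μ := by
      refine (integrable_const (Real.exp ((n:ℝ)+1))).mono' hfm.aestronglyMeasurable ?_
      filter_upwards [hSbd] with ω hω
      rw [Real.norm_eq_abs, abs_of_nonneg (Real.exp_pos _).le]
      exact Real.exp_le_exp.mpr hω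
    have hh_le_one : ∀ ω, h ω ≤ 1 := fun ω =>
      Real.exp_le_one_iff.mpr (neg_nonpos.mpr (hbound (n+1) ω).1)
    have hhint : Integrable h μ := by
      refine (integrable_const (1:ℝ)).mono' hhm.aestronglyMeasurable ?_
      exact Filter.Eventually.of_forall fun ω => by
        rw [Real.norm_eq_abs, abs_of_nonneg (Real.exp_pos _).le]; exact hh_le_one ω
    have hfhint : Integrable (f * h) μ := by
      refine (integrable_const (Real.exp ((n:ℝ)+1))).mono'
        (hfm.mul hhm).aestronglyMeasurable ?_
      filter_upwards [hSbd] with ω hω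
      rw [Pi.mul_apply, Real.norm_eq_abs, abs_of_nonneg
        (mul_nonneg (Real.exp_pos _).le (Real.exp_pos _).le)]
      calc f ω * h ω ≤ f ω * 1 :=
            mul_le_mul_of_nonneg_left (hh_le_one ω) (Real.exp_pos _).le
        _ = f ω := mul_one _
        _ ≤ Real.exp ((n:ℝ)+1) := Real.exp_le_exp.mpr hω
    -- conditional expectation bound : μ[h | F n] ≤ᵐ exp (- g n / 2)
    have hcond : (μ[h | F n]) ≤ᵐ[μ] fun ω => Real.exp (-(g n ω) / 2) := by
      have hpt : h ≤ᵐ[μ] fun ω => 1 - X (n+1) ω / 2 := by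
        refine Filter.Eventually.of_forall fun ω => ?_
        have hx0 := (hbound (n+1) ω).1
        have hx1 := (hbound (n+1) ω).2
        have h1 : Real.exp (-(X (n+1) ω)) ≤ 1 / (1 + X (n+1) ω) := by
          rw [Real.exp_neg, one_div]
          exact inv_anti₀ (by linarith) (by linarith [Real.add_one_le_exp (X (n+1) ω)])
        have h2 : 1 / (1 + X (n+1) ω) ≤ 1 - X (n+1) ω / 2 := by
          rw [div_le_iff₀ (by linarith)]
          nlinarith
        exact h1.trans h2
      have hq : Integrable (fun ω => 1 - X (n+1) ω / 2) μ := by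
        have : (fun ω => 1 - X (n+1) ω / 2)
            = (fun _ => (1:ℝ)) - (2⁻¹ : ℝ) • X (n+1) := by
          funext ω; simp [smul_eq_mul]; ring
        rw [this]
        exact (integrable_const 1).sub (((hXint n)).smul (2⁻¹ : ℝ))
      have hmono2 : μ[h | F n] ≤ᵐ[μ] μ[fun ω => 1 - X (n+1) ω / 2 | F n] :=
        condExp_mono hhint hq hpt
      have hsub : μ[fun ω => 1 - X (n+1) ω / 2 | F n]
          =ᵐ[μ] fun ω => 1 - g n ω / 2 := by
        have e0 : (fun ω => 1 - X (n+1) ω / 2)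
            = (fun _ => (1:ℝ)) - (2⁻¹ : ℝ) • X (n+1) := by
          funext ω; simp [smul_eq_mul]; ring
        rw [e0]
        have e1 := condExp_sub (m := F n) (μ := μ) (integrable_const (1:ℝ))
          ((hXint n).smul (2⁻¹ : ℝ))
        have e2 := condExp_smul (m := F n) (μ := μ) (2⁻¹ : ℝ) (X (n+1))
        filter_upwards [e1, e2] with ω h1 h2
        rw [h1]
        simp only [Pi.sub_apply, condExp_const (hle n) (1:ℝ)]
        rw [h2]
        simp [smul_eq_mul, hg]
        ring
      have hexp : (fun ω => 1 - g n ω / 2) ≤ᵐ[μ] fun ω => Real.exp (-(g n ω) / 2) := by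
        refine Filter.Eventually.of_forall fun ω => ?_
        have := Real.add_one_le_exp (-(g n ω) / 2)
        linarith
      calc μ[h | F n] ≤ᵐ[μ] μ[fun ω => 1 - X (n+1) ω / 2 | F n] := hmono2
        _ =ᵐ[μ] fun ω => 1 - g n ω / 2 := hsub
        _ ≤ᵐ[μ] fun ω => Real.exp (-(g n ω) / 2) := hexp
    -- main computation
    have hsplit : (fun ω => Real.exp (∑ t ∈ Finset.range (n+1),
        (g t ω / 2 - X (t+1) ω))) = f * h := by
      funext ω
      simp only [Pi.mul_apply, hf, hh, hS]
      rw [Finset.sum_range_succ, ← Real.exp_add]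
      congr 1
      ring
    rw [hsplit]
    calc ∫ ω, (f * h) ω ∂μ
        = ∫ ω, (μ[f * h | F n]) ω ∂μ := (integral_condExp (hle n)).symm
      _ ≤ ∫ ω, Real.exp (S ω) ∂μ := by
          apply integral_mono_ae integrable_condExp
          · refine (integrable_const (Real.exp ((n:ℝ)+1))).mono'
              ((hSmeas.mono (hle n) le_rfl).exp).aestronglyMeasurable ?_
            filter_upwards [hSbd, hgae] with ω hω hg'
            rw [Real.norm_eq_abs, abs_of_nonneg (Real.exp_pos _).le]
            apply Real.exp_le_exp.mpr
            have := (hg' n).1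
            linarith
          · have hmul := condExp_mul_of_stronglyMeasurable_left hfsm hfhint hhint
            filter_upwards [hmul, hcond] with ω h1 h2
            rw [h1, Pi.mul_apply]
            calc f ω * (μ[h | F n]) ω ≤ f ω * Real.exp (-(g n ω) / 2) :=
                  mul_le_mul_of_nonneg_left h2 (Real.exp_pos _).le
              _ = Real.exp (S ω) := by
                  rw [hf, ← Real.exp_add]; ring_nf
      _ ≤ 1 := ih

/-- Multiplicative Azuma: for adapted random variables `X₁, …, X_N` with values in `[0,1]`
(`X_t` being `ℱ_t`-measurable), for any `δ ∈ (0,1)`, with probability at least `1 − δ`,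
`Σ_{t=1}^N E[X_t | ℱ_{t−1}] ≤ 2 Σ_{t=1}^N X_t + 2 log(1/δ)`. -/
theorem multiplicative_azuma {Ω : Type*} {m : MeasurableSpace Ω}
    (μ : Measure Ω) [IsProbabilityMeasure μ]
    (N : ℕ) (F : ℕ → MeasurableSpace Ω) (hmono : ∀ i j, i ≤ j → F i ≤ F j)
    (hle : ∀ i, F i ≤ m)
    (X : ℕ → Ω → ℝ) (hadapted : ∀ t, Measurable[F (t+1)] (X (t+1)))
    (hbound : ∀ t ω, X t ω ∈ Set.Icc (0:ℝ) 1)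
    (δ : ℝ) (hδ : δ ∈ Set.Ioo (0:ℝ) 1) :
    (1 - δ : ℝ) ≤ (μ {ω | ∑ t ∈ Finset.range N, (μ[X (t+1) | F t]) ω
        ≤ 2 * ∑ t ∈ Finset.range N, X (t+1) ω + 2 * Real.log (1/δ)}).toReal := by
  obtain ⟨hδ0, hδ1⟩ := hδ
  set S : Ω → ℝ := fun ω => ∑ t ∈ Finset.range N,
    ((μ[X (t+1) | F t]) ω / 2 - X (t+1) ω) with hS
  have hSm : Measurable S :=
    (mult_azuma_meas μ F hmono X hadapted N).mono (hle N) le_rfl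
  have hint : Integrable (fun ω => Real.exp (S ω)) μ := by
    have hXm : ∀ t, Measurable (X (t+1)) := fun t => (hadapted t).mono (hle (t+1)) le_rfl
    have hXint : ∀ t, Integrable (X (t+1)) μ := by
      intro t
      refine (integrable_const (1:ℝ)).mono' (hXm t).aestronglyMeasurable ?_
      refine Filter.Eventually.of_forall fun ω => ?_
      rw [Real.norm_eq_abs, abs_of_nonneg (hbound (t+1) ω).1]
      exact (hbound (t+1) ω).2
    have hgae : ∀ᵐ ω ∂μ, ∀ t : ℕ, (μ[X (t+1) | F t]) ω ≤ 1 := by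
      rw [ae_all_iff]
      intro t
      have h1 := condExp_mono (m := F t) (hXint t) (integrable_const (1:ℝ))
        (Filter.Eventually.of_forall fun ω => (hbound (t+1) ω).2)
      rwa [condExp_const (hle t) (1:ℝ)] at h1
    refine (integrable_const (Real.exp (N:ℝ))).mono' hSm.exp.aestronglyMeasurable ?_
    filter_upwards [hgae] with ω hω
    rw [Real.norm_eq_abs, abs_of_nonneg (Real.exp_pos _).le]
    apply Real.exp_le_exp.mpr
    calc S ω ≤ ∑ t ∈ Finset.range N, (1:ℝ) := by
          apply Finset.sum_le_sum
          intro t _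
          have := hω t
          have := (hbound (t+1) ω).1
          linarith
      _ = (N:ℝ) := by simp
  have hSnn : 0 ≤ᵐ[μ] fun ω => Real.exp (S ω) :=
    Filter.Eventually.of_forall fun ω => (Real.exp_pos _).le
  have hkey := mult_azuma_key μ F hmono hle X hadapted hbound N
  have hmarkov := mul_meas_ge_le_integral_of_nonneg hSnn hint (1/δ)
  set A : Set Ω := {ω | 1/δ ≤ Real.exp (S ω)} with hA
  have hAmeas : MeasurableSet A := measurableSet_le measurable_const hSm.exp
  have hAle : (μ A).toReal ≤ δ := by
    have h1 : (1/δ) * (μ A).toReal ≤ 1 := le_trans hmarkov hkey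
    have h2 : 0 < 1/δ := by positivity
    calc (μ A).toReal = δ * ((1/δ) * (μ A).toReal) := by
          field_simp
      _ ≤ δ * 1 := mul_le_mul_of_nonneg_left h1 hδ0.le
      _ = δ := mul_one _
  have hsub : Aᶜ ⊆ {ω | ∑ t ∈ Finset.range N, (μ[X (t+1) | F t]) ω
      ≤ 2 * ∑ t ∈ Finset.range N, X (t+1) ω + 2 * Real.log (1/δ)} := by
    intro ω hω
    simp only [hA, Set.mem_compl_iff, Set.mem_setOf_eq, not_le] at hω
    have hlog : S ω < Real.log (1/δ) := by
      have h1 : Real.exp (S ω) < Real.exp (Real.log (1/δ)) := by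
        rwa [Real.exp_log (by positivity)]
      exact Real.exp_lt_exp.mp h1
    have hsum : S ω = (∑ t ∈ Finset.range N, (μ[X (t+1) | F t]) ω) / 2
        - ∑ t ∈ Finset.range N, X (t+1) ω := by
      simp only [hS, Finset.sum_sub_distrib, Finset.sum_div]
    simp only [Set.mem_setOf_eq]
    rw [hsum] at hlog
    linarith
  have hcompl : (μ Aᶜ).toReal = 1 - (μ A).toReal := by
    rw [measure_compl hAmeas (measure_ne_top μ A), measure_univ,
      ENNReal.toReal_sub_of_le prob_le_one ENNReal.one_ne_top, ENNReal.toReal_one]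
  calc (1 - δ : ℝ) ≤ 1 - (μ A).toReal := by linarith
    _ = (μ Aᶜ).toReal := hcompl.symm
    _ ≤ _ := ENNReal.toReal_mono (measure_ne_top μ _) (measure_mono hsub)
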